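/- For every n ≥ 1, the adjacency matrix Δₙ = aₙ + bₙ + cₙ of the level-n Schreier graph of the Hanoi Towers group on three pegs has exactly 3·2^{n−1} − 1 distinct real eigenvalues. -/

import Mathlib

/-- Generator matrix `aₙ` (size `3ⁿ × 3ⁿ`, indexed by ternary words of length `n`):
`a₀ = [1]`, `a_{n+1} = [[0ₙ,1ₙ,0ₙ],[1ₙ,0ₙ,0ₙ],[0ₙ,0ₙ,aₙ]]` in block form. -/
noncomputable def hanoiGenA : (n : ℕ) → Matrix (Fin n → Fin 3) (Fin n → Fin 3) ℝ
  | 0 => 1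
  | n + 1 => Matrix.of fun u v =>
      (![![0, 1, 0],
         ![1, 0, 0],
         ![0, 0, hanoiGenA n]] :
        Fin 3 → Fin 3 → Matrix (Fin n → Fin 3) (Fin n → Fin 3) ℝ)
        (u 0) (v 0) (Fin.tail u) (Fin.tail v)

/-- `b₀ = [1]`, `b_{n+1} = [[0ₙ,0ₙ,1ₙ],[0ₙ,bₙ,0ₙ],[1ₙ,0ₙ,0ₙ]]`. -/
noncomputable def hanoiGenB : (n : ℕ) → Matrix (Fin n → Fin 3) (Fin n → Fin 3) ℝ
  | 0 => 1
  | n + 1 => Matrix.of fun u v =>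
      (![![0, 0, 1],
         ![0, hanoiGenB n, 0],
         ![1, 0, 0]] :
        Fin 3 → Fin 3 → Matrix (Fin n → Fin 3) (Fin n → Fin 3) ℝ)
        (u 0) (v 0) (Fin.tail u) (Fin.tail v)

/-- `c₀ = [1]`, `c_{n+1} = [[cₙ,0ₙ,0ₙ],[0ₙ,0ₙ,1ₙ],[0ₙ,1ₙ,0ₙ]]`. -/
noncomputable def hanoiGenC : (n : ℕ) → Matrix (Fin n → Fin 3) (Fin n → Fin 3) ℝ
  | 0 => 1
  | n + 1 => Matrix.of fun u v =>
      (![![hanoiGenC n, 0, 0],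
         ![0, 0, 1],
         ![0, 1, 0]] :
        Fin 3 → Fin 3 → Matrix (Fin n → Fin 3) (Fin n → Fin 3) ℝ)
        (u 0) (v 0) (Fin.tail u) (Fin.tail v)

/-- The adjacency matrix `Δₙ = aₙ + bₙ + cₙ` of the level-`n` Schreier graph `Γₙ`
of the Hanoi Towers group on three pegs. -/
noncomputable def hanoiAdj (n : ℕ) : Matrix (Fin n → Fin 3) (Fin n → Fin 3) ℝ :=
  hanoiGenA n + hanoiGenB n + hanoiGenC n

/-- The quadratic polynomial `f(x) = x² - x - 3`. -/
noncomputable def hanoiF (x : ℝ) : ℝ := x ^ 2 - x - 3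

open Matrix

-- ### infrastructure
abbrev HV (n : ℕ) := Fin n → Fin 3

noncomputable def hBlk {n : ℕ} (F : Fin 3 → Fin 3 → Matrix (HV n) (HV n) ℝ) :
    Matrix (HV (n+1)) (HV (n+1)) ℝ :=
  Matrix.of fun u v => F (u 0) (v 0) (Fin.tail u) (Fin.tail v)

lemma hBlk_apply {n : ℕ} (F : Fin 3 → Fin 3 → Matrix (HV n) (HV n) ℝ) (u v : HV (n+1)) :
    hBlk F u v = F (u 0) (v 0) (Fin.tail u) (Fin.tail v) := rfl

lemma sum_succ {n : ℕ} (g : HV (n+1) → ℝ) :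
    ∑ u, g u = ∑ i : Fin 3, ∑ t : HV n, g (Fin.cons i t) := by
  calc ∑ u, g u = ∑ p : Fin 3 × HV n, g (Fin.cons p.1 p.2) :=
        Fintype.sum_equiv ((Fin.consEquiv (fun _ : Fin (n+1) => Fin 3)).symm) _ _
          (fun u => by simp [Fin.consEquiv, Fin.cons_self_tail])
    _ = ∑ i, ∑ t, g (Fin.cons i t) := Fintype.sum_prod_type _

lemma cons_eq_iff {n : ℕ} (u v : HV (n+1)) :
    u = v ↔ u 0 = v 0 ∧ Fin.tail u = Fin.tail v :=
  ⟨fun h => by subst h; exact ⟨rfl, rfl⟩,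
   fun ⟨h1, h2⟩ => by
    rw [← Fin.cons_self_tail u, ← Fin.cons_self_tail v, h1, h2]⟩

/-- prove equality of functions on `HV (n+1)` from values on `Fin.cons`. -/
lemma funext_cons {n : ℕ} {g h : HV (n+1) → ℝ}
    (H : ∀ i t, g (Fin.cons i t) = h (Fin.cons i t)) : g = h := by
  funext u
  have := H (u 0) (Fin.tail u)
  rwa [Fin.cons_self_tail] at this

lemma hBlk_mul {n : ℕ} (F G : Fin 3 → Fin 3 → Matrix (HV n) (HV n) ℝ) :
    hBlk F * hBlk G = hBlk (fun i k => ∑ j : Fin 3, F i j * G j k) := by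
  ext u v
  simp only [Matrix.mul_apply, hBlk_apply, Matrix.sum_apply]
  rw [sum_succ (fun w => F (u 0) (w 0) (Fin.tail u) (Fin.tail w) * G (w 0) (v 0) (Fin.tail w) (Fin.tail v))]
  simp [Matrix.mul_apply, Fin.tail_cons]

lemma hBlk_mulVec {n : ℕ} (F : Fin 3 → Fin 3 → Matrix (HV n) (HV n) ℝ) (w : HV (n+1) → ℝ)
    (i : Fin 3) (t : HV n) :
    (hBlk F).mulVec w (Fin.cons i t) =
      ∑ j : Fin 3, (F i j).mulVec (fun s => w (Fin.cons j s)) t := by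
  simp only [Matrix.mulVec, dotProduct]
  rw [sum_succ (fun v => hBlk F (Fin.cons i t) v * w v)]
  simp [hBlk_apply, Fin.tail_cons]

lemma hBlk_one {n : ℕ} :
    hBlk (n := n) ![![1,0,0],![0,1,0],![0,0,1]] = 1 := by
  have entry : ∀ i j : Fin 3,
      (![![1,0,0],![0,1,0],![0,0,1]] : Fin 3 → Fin 3 → Matrix (HV n) (HV n) ℝ) i j
        = if i = j then 1 else 0 := by
    intro i j; fin_cases i <;> fin_cases j <;> simp [Matrix.vecHead, Matrix.vecTail]
  ext u v
  rw [hBlk_apply, entry, Matrix.one_apply]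
  by_cases h1 : u 0 = v 0
  · simp [h1, Matrix.one_apply, cons_eq_iff u v]
  · simp [h1, cons_eq_iff u v]

-- block representations
lemma genA_succ (n : ℕ) :
    hanoiGenA (n+1) = hBlk ![![0,1,0],![1,0,0],![0,0,hanoiGenA n]] := rfl
lemma genB_succ (n : ℕ) :
    hanoiGenB (n+1) = hBlk ![![0,0,1],![0,hanoiGenB n,0],![1,0,0]] := rfl
lemma genC_succ (n : ℕ) :
    hanoiGenC (n+1) = hBlk ![![hanoiGenC n,0,0],![0,0,1],![0,1,0]] := rfl

lemma genA_zero : hanoiGenA 0 = 1 := rfl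
lemma genB_zero : hanoiGenB 0 = 1 := rfl
lemma genC_zero : hanoiGenC 0 = 1 := rfl

-- involutions
lemma genA_invol : ∀ n, hanoiGenA n * hanoiGenA n = 1
  | 0 => by rw [genA_zero, one_mul]
  | n + 1 => by
    rw [genA_succ, hBlk_mul]
    have h : (fun i k => ∑ j : Fin 3,
        (![![0,1,0],![1,0,0],![0,0,hanoiGenA n]] : Fin 3 → Fin 3 → Matrix (HV n) (HV n) ℝ) i j *
        ![![0,1,0],![1,0,0],![0,0,hanoiGenA n]] j k)
        = (![![1,0,0],![0,1,0],![0,0,1]] : Fin 3 → Fin 3 → Matrix (HV n) (HV n) ℝ) := by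
      funext i k
      fin_cases i <;> fin_cases k <;>
        simp [Fin.sum_univ_three, Matrix.vecHead, Matrix.vecTail, genA_invol n]
    rw [h, hBlk_one]

lemma genB_invol : ∀ n, hanoiGenB n * hanoiGenB n = 1
  | 0 => by rw [genB_zero, one_mul]
  | n + 1 => by
    rw [genB_succ, hBlk_mul]
    have h : (fun i k => ∑ j : Fin 3,
        (![![0,0,1],![0,hanoiGenB n,0],![1,0,0]] : Fin 3 → Fin 3 → Matrix (HV n) (HV n) ℝ) i j *
        ![![0,0,1],![0,hanoiGenB n,0],![1,0,0]] j k)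
        = (![![1,0,0],![0,1,0],![0,0,1]] : Fin 3 → Fin 3 → Matrix (HV n) (HV n) ℝ) := by
      funext i k
      fin_cases i <;> fin_cases k <;>
        simp [Fin.sum_univ_three, Matrix.vecHead, Matrix.vecTail, genB_invol n]
    rw [h, hBlk_one]

lemma genC_invol : ∀ n, hanoiGenC n * hanoiGenC n = 1
  | 0 => by rw [genC_zero, one_mul]
  | n + 1 => by
    rw [genC_succ, hBlk_mul]
    have h : (fun i k => ∑ j : Fin 3,
        (![![hanoiGenC n,0,0],![0,0,1],![0,1,0]] : Fin 3 → Fin 3 → Matrix (HV n) (HV n) ℝ) i j *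
        ![![hanoiGenC n,0,0],![0,0,1],![0,1,0]] j k)
        = (![![1,0,0],![0,1,0],![0,0,1]] : Fin 3 → Fin 3 → Matrix (HV n) (HV n) ℝ) := by
      funext i k
      fin_cases i <;> fin_cases k <;>
        simp [Fin.sum_univ_three, Matrix.vecHead, Matrix.vecTail, genC_invol n]
    rw [h, hBlk_one]

-- row sums
lemma genA_rowsum : ∀ n, (hanoiGenA n).mulVec 1 = 1
  | 0 => by rw [genA_zero, Matrix.one_mulVec]
  | n + 1 => by
    refine funext_cons fun i t => ?_
    rw [genA_succ, hBlk_mulVec]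
    have h1 : ∀ j : Fin 3, (fun s => (1 : HV (n+1) → ℝ) (Fin.cons j s)) = (1 : HV n → ℝ) := by
      intro j; funext s; rfl
    simp only [h1]
    fin_cases i <;>
      simp [Fin.sum_univ_three, Matrix.vecHead, Matrix.vecTail,
        Matrix.zero_mulVec, Matrix.one_mulVec, genA_rowsum n]

lemma genB_rowsum : ∀ n, (hanoiGenB n).mulVec 1 = 1
  | 0 => by rw [genB_zero, Matrix.one_mulVec]
  | n + 1 => by
    refine funext_cons fun i t => ?_
    rw [genB_succ, hBlk_mulVec]
    have h1 : ∀ j : Fin 3, (fun s => (1 : HV (n+1) → ℝ) (Fin.cons j s)) = (1 : HV n → ℝ) := by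
      intro j; funext s; rfl
    simp only [h1]
    fin_cases i <;>
      simp [Fin.sum_univ_three, Matrix.vecHead, Matrix.vecTail,
        Matrix.zero_mulVec, Matrix.one_mulVec, genB_rowsum n]

lemma genC_rowsum : ∀ n, (hanoiGenC n).mulVec 1 = 1
  | 0 => by rw [genC_zero, Matrix.one_mulVec]
  | n + 1 => by
    refine funext_cons fun i t => ?_
    rw [genC_succ, hBlk_mulVec]
    have h1 : ∀ j : Fin 3, (fun s => (1 : HV (n+1) → ℝ) (Fin.cons j s)) = (1 : HV n → ℝ) := by
      intro j; funext s; rfl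
    simp only [h1]
    fin_cases i <;>
      simp [Fin.sum_univ_three, Matrix.vecHead, Matrix.vecTail,
        Matrix.zero_mulVec, Matrix.one_mulVec, genC_rowsum n]

lemma adj_succ (n : ℕ) :
    hanoiAdj (n+1) = hBlk ![![hanoiGenC n,1,1],![1,hanoiGenB n,1],![1,1,hanoiGenA n]] := by
  have hadd : ∀ F G H : Fin 3 → Fin 3 → Matrix (HV n) (HV n) ℝ,
      hBlk F + hBlk G + hBlk H = hBlk (fun i j => F i j + G i j + H i j) := by
    intro F G H; ext u v; simp [hBlk_apply, Matrix.add_apply]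
  rw [hanoiAdj, genA_succ, genB_succ, genC_succ, hadd]
  have h : (fun i j =>
      (![![0,1,0],![1,0,0],![0,0,hanoiGenA n]] : Fin 3 → Fin 3 → Matrix (HV n) (HV n) ℝ) i j +
      ![![0,0,1],![0,hanoiGenB n,0],![1,0,0]] i j +
      ![![hanoiGenC n,0,0],![0,0,1],![0,1,0]] i j)
      = (![![hanoiGenC n,1,1],![1,hanoiGenB n,1],![1,1,hanoiGenA n]] :
          Fin 3 → Fin 3 → Matrix (HV n) (HV n) ℝ) := by
    funext i j
    fin_cases i <;> fin_cases j <;> simp [Matrix.vecHead, Matrix.vecTail]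
  rw [h]

lemma adj_mulVec0 {n : ℕ} (w : HV (n+1) → ℝ) :
    (fun t => (hanoiAdj (n+1)).mulVec w (Fin.cons 0 t)) =
      (hanoiGenC n).mulVec (fun s => w (Fin.cons 0 s)) +
        (fun s => w (Fin.cons 1 s)) + (fun s => w (Fin.cons 2 s)) := by
  funext t
  rw [adj_succ, hBlk_mulVec]
  simp [Fin.sum_univ_three, Matrix.vecHead, Matrix.vecTail, Matrix.one_mulVec]

lemma adj_mulVec1 {n : ℕ} (w : HV (n+1) → ℝ) :
    (fun t => (hanoiAdj (n+1)).mulVec w (Fin.cons 1 t)) =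
      (fun s => w (Fin.cons 0 s)) +
        (hanoiGenB n).mulVec (fun s => w (Fin.cons 1 s)) + (fun s => w (Fin.cons 2 s)) := by
  funext t
  rw [adj_succ, hBlk_mulVec]
  simp [Fin.sum_univ_three, Matrix.vecHead, Matrix.vecTail, Matrix.one_mulVec]

lemma adj_mulVec2 {n : ℕ} (w : HV (n+1) → ℝ) :
    (fun t => (hanoiAdj (n+1)).mulVec w (Fin.cons 2 t)) =
      (fun s => w (Fin.cons 0 s)) + (fun s => w (Fin.cons 1 s)) +
        (hanoiGenA n).mulVec (fun s => w (Fin.cons 2 s)) := by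
  funext t
  rw [adj_succ, hBlk_mulVec]
  simp [Fin.sum_univ_three, Matrix.vecHead, Matrix.vecTail, Matrix.one_mulVec]

lemma mem_spec_iff {ι : Type*} [Fintype ι] [DecidableEq ι] (M : Matrix ι ι ℝ) (x : ℝ) :
    x ∈ spectrum ℝ M ↔ ∃ v, v ≠ 0 ∧ M.mulVec v = x • v := by
  rw [spectrum.mem_iff, Matrix.isUnit_iff_isUnit_det, isUnit_iff_ne_zero, not_not,
    ← Matrix.exists_mulVec_eq_zero_iff]
  have key : ∀ v, (algebraMap ℝ (Matrix ι ι ℝ) x - M).mulVec v = x • v - M.mulVec v := by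
    intro v
    rw [Matrix.sub_mulVec, Algebra.algebraMap_eq_smul_one, Matrix.smul_mulVec,
      Matrix.one_mulVec]
  constructor
  · rintro ⟨v, hv, h⟩
    rw [key] at h
    exact ⟨v, hv, (sub_eq_zero.mp h).symm⟩
  · rintro ⟨v, hv, h⟩
    exact ⟨v, hv, by rw [key, h, sub_self]⟩

lemma hanoi_decimation {n : ℕ} {x : ℝ} (hx0 : x ≠ 0) (hx2 : x ≠ -2) :
    x ∈ spectrum ℝ (hanoiAdj (n+1)) ↔ (x^2 - x - 3) ∈ spectrum ℝ (hanoiAdj n) := by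
  have hx : x^2 + 2*x ≠ 0 := by
    intro hc
    rcases mul_eq_zero.mp (show x * (x+2) = 0 by linarith [hc, sq_nonneg x]; ) with h | h
    · exact hx0 h
    · exact hx2 (by linarith)
  rw [mem_spec_iff, mem_spec_iff]
  constructor
  · rintro ⟨w, hw, h⟩
    set w0 : HV n → ℝ := fun s => w (Fin.cons 0 s) with hw0
    set w1 : HV n → ℝ := fun s => w (Fin.cons 1 s) with hw1
    set w2 : HV n → ℝ := fun s => w (Fin.cons 2 s) with hw2
    set s : HV n → ℝ := w0 + w1 + w2 with hs
    have E0 : (hanoiGenC n).mulVec w0 + w1 + w2 = fun t => x * w0 t := by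
      rw [← adj_mulVec0 w, h]; rfl
    have E1 : w0 + (hanoiGenB n).mulVec w1 + w2 = fun t => x * w1 t := by
      rw [← adj_mulVec1 w, h]; rfl
    have E2 : w0 + w1 + (hanoiGenA n).mulVec w2 = fun t => x * w2 t := by
      rw [← adj_mulVec2 w, h]; rfl
    -- rewrite as C w0 = (x+1) w0 - s etc.
    have hC : (hanoiGenC n).mulVec w0 = (x+1) • w0 - s := by
      funext t
      have e := congrFun E0 t
      simp only [Pi.add_apply, Pi.smul_apply, Pi.sub_apply, hs, smul_eq_mul] at e ⊢
      linear_combination e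
    have hB : (hanoiGenB n).mulVec w1 = (x+1) • w1 - s := by
      funext t
      have e := congrFun E1 t
      simp only [Pi.add_apply, Pi.smul_apply, Pi.sub_apply, hs, smul_eq_mul] at e ⊢
      linear_combination e
    have hA : (hanoiGenA n).mulVec w2 = (x+1) • w2 - s := by
      funext t
      have e := congrFun E2 t
      simp only [Pi.add_apply, Pi.smul_apply, Pi.sub_apply, hs, smul_eq_mul] at e ⊢
      linear_combination e
    -- apply involutions
    have star : ∀ (M : Matrix (HV n) (HV n) ℝ) (v : HV n → ℝ), M * M = 1 →
        M.mulVec v = (x+1) • v - s →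
        (fun t => (x^2+2*x) * v t) = (x+1) • s + M.mulVec s := by
      intro M v hM hMv
      have h2 : v = (x+1) • ((x+1) • v - s) - M.mulVec s := by
        conv_lhs => rw [← Matrix.one_mulVec v, ← hM, ← Matrix.mulVec_mulVec, hMv,
          Matrix.mulVec_sub, Matrix.mulVec_smul, hMv]
      funext t
      have e := congrFun h2 t
      simp only [Pi.add_apply, Pi.smul_apply, Pi.sub_apply, smul_eq_mul] at e ⊢
      linear_combination -e
    have star0 := star _ _ (genC_invol n) hC
    have star1 := star _ _ (genB_invol n) hB
    have star2 := star _ _ (genA_invol n) hA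
    have hΔ : (hanoiAdj n).mulVec s =
        (hanoiGenA n).mulVec s + (hanoiGenB n).mulVec s + (hanoiGenC n).mulVec s := by
      rw [hanoiAdj, Matrix.add_mulVec, Matrix.add_mulVec]
    refine ⟨s, ?_, ?_⟩
    · intro h0
      apply hw
      have hz : ∀ (M : Matrix (HV n) (HV n) ℝ) (v : HV n → ℝ),
          ((fun t => (x^2+2*x) * v t) = (x+1) • s + M.mulVec s) → v = 0 := by
        intro M v hv
        rw [h0, Matrix.mulVec_zero, smul_zero, add_zero] at hv
        funext t
        have := congrFun hv t
        simp only [Pi.zero_apply] at this ⊢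
        exact by
          have := mul_eq_zero.mp this
          rcases this with h | h
          · exact absurd h hx
          · exact h
      have z0 := hz _ _ star0
      have z1 := hz _ _ star1
      have z2 := hz _ _ star2
      refine funext_cons fun i t => ?_
      fin_cases i
      · exact congrFun z0 t
      · exact congrFun z1 t
      · exact congrFun z2 t
    · funext t
      have e0 := congrFun star0 t
      have e1 := congrFun star1 t
      have e2 := congrFun star2 t
      have eΔ := congrFun hΔ t
      simp only [Pi.add_apply, Pi.smul_apply, Pi.sub_apply, hs, smul_eq_mul] at e0 e1 e2 eΔ ⊢
      linear_combination eΔ - e0 - e1 - e2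
  · rintro ⟨s, hsne, hsum⟩
    set w0 : HV n → ℝ := (x+1) • s + (hanoiGenC n).mulVec s with hw0
    set w1 : HV n → ℝ := (x+1) • s + (hanoiGenB n).mulVec s with hw1
    set w2 : HV n → ℝ := (x+1) • s + (hanoiGenA n).mulVec s with hw2
    set w : HV (n+1) → ℝ := fun u => ![w0, w1, w2] (u 0) (Fin.tail u) with hwdef
    have wcons : ∀ (j : Fin 3) (t : HV n), w (Fin.cons j t) = ![w0,w1,w2] j t := by
      intro j t
      simp [hwdef, Fin.cons_zero, Fin.tail_cons]
    have wcons0 : (fun t => w (Fin.cons 0 t)) = w0 := by funext t; simp [wcons]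
    have wcons1 : (fun t => w (Fin.cons 1 t)) = w1 := by funext t; simp [wcons]
    have wcons2 : (fun t => w (Fin.cons 2 t)) = w2 := by funext t; simp [wcons]
    have hΔ : (hanoiAdj n).mulVec s =
        (hanoiGenA n).mulVec s + (hanoiGenB n).mulVec s + (hanoiGenC n).mulVec s := by
      rw [hanoiAdj, Matrix.add_mulVec, Matrix.add_mulVec]
    have invC : (hanoiGenC n).mulVec ((hanoiGenC n).mulVec s) = s := by
      rw [Matrix.mulVec_mulVec, genC_invol, Matrix.one_mulVec]
    have invB : (hanoiGenB n).mulVec ((hanoiGenB n).mulVec s) = s := by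
      rw [Matrix.mulVec_mulVec, genB_invol, Matrix.one_mulVec]
    have invA : (hanoiGenA n).mulVec ((hanoiGenA n).mulVec s) = s := by
      rw [Matrix.mulVec_mulVec, genA_invol, Matrix.one_mulVec]
    have mvC : (hanoiGenC n).mulVec w0 = (x+1) • (hanoiGenC n).mulVec s + s := by
      rw [hw0, Matrix.mulVec_add, Matrix.mulVec_smul, invC]
    have mvB : (hanoiGenB n).mulVec w1 = (x+1) • (hanoiGenB n).mulVec s + s := by
      rw [hw1, Matrix.mulVec_add, Matrix.mulVec_smul, invB]
    have mvA : (hanoiGenA n).mulVec w2 = (x+1) • (hanoiGenA n).mulVec s + s := by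
      rw [hw2, Matrix.mulVec_add, Matrix.mulVec_smul, invA]
    refine ⟨w, ?_, ?_⟩
    · intro h0
      apply hsne
      have z : ∀ j : Fin 3, ∀ t, w (Fin.cons j t) = 0 := by
        intro j t; rw [h0]; rfl
      funext t
      have e0 := z 0 t
      have e1 := z 1 t
      have e2 := z 2 t
      rw [wcons] at e0 e1 e2
      simp only [Matrix.cons_val_zero, Matrix.cons_val_one, Matrix.head_cons,
        Matrix.cons_val_two, Matrix.tail_cons, hw0, hw1, hw2,
        Pi.add_apply, Pi.smul_apply, smul_eq_mul] at e0 e1 e2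
      have eΔ := congrFun hΔ t
      have eS := congrFun hsum t
      simp only [Pi.add_apply, Pi.smul_apply, smul_eq_mul, Pi.zero_apply] at eΔ eS ⊢
      have key : (x^2 + 2*x) * s t = 0 := by linear_combination e0 + e1 + e2 + eΔ - eS
      rcases mul_eq_zero.mp key with h | h
      · exact absurd h hx
      · exact h
    · have G0 : ∀ t, (hanoiAdj (n+1)).mulVec w (Fin.cons 0 t) = (x • w) (Fin.cons 0 t) := by
        intro t
        have e := congrFun (adj_mulVec0 w) t
        rw [wcons0, wcons1, wcons2, mvC] at e
        rw [e, Pi.smul_apply, wcons, smul_eq_mul]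
        have eS := congrFun hsum t
        have eΔ := congrFun hΔ t
        simp only [Pi.add_apply, Pi.smul_apply, smul_eq_mul, hw0, hw1, hw2, Pi.sub_apply,
          Matrix.cons_val_zero, Matrix.cons_val_one, Matrix.head_cons] at eS eΔ ⊢
        linear_combination eS - eΔ
      have G1 : ∀ t, (hanoiAdj (n+1)).mulVec w (Fin.cons 1 t) = (x • w) (Fin.cons 1 t) := by
        intro t
        have e := congrFun (adj_mulVec1 w) t
        rw [wcons0, wcons1, wcons2, mvB] at e
        rw [e, Pi.smul_apply, wcons, smul_eq_mul]
        have eS := congrFun hsum t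
        have eΔ := congrFun hΔ t
        simp only [Pi.add_apply, Pi.smul_apply, smul_eq_mul, hw0, hw1, hw2, Pi.sub_apply,
          Matrix.cons_val_zero, Matrix.cons_val_one, Matrix.head_cons] at eS eΔ ⊢
        linear_combination eS - eΔ
      have G2 : ∀ t, (hanoiAdj (n+1)).mulVec w (Fin.cons 2 t) = (x • w) (Fin.cons 2 t) := by
        intro t
        have e := congrFun (adj_mulVec2 w) t
        rw [wcons0, wcons1, wcons2, mvA] at e
        rw [e, Pi.smul_apply, wcons, smul_eq_mul]
        have eS := congrFun hsum t
        have eΔ := congrFun hΔ t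
        simp only [Pi.add_apply, Pi.smul_apply, smul_eq_mul, hw0, hw1, hw2, Pi.sub_apply,
          Matrix.cons_val_zero, Matrix.cons_val_one, Matrix.head_cons,
          Matrix.cons_val_two, Matrix.tail_cons] at eS eΔ ⊢
        linear_combination eS - eΔ
      refine funext_cons fun i t => ?_
      fin_cases i
      · exact G0 t
      · exact G1 t
      · exact G2 t

lemma adj_mulVec_gens (n : ℕ) (v : HV n → ℝ) :
    (hanoiAdj n).mulVec v =
      (hanoiGenA n).mulVec v + (hanoiGenB n).mulVec v + (hanoiGenC n).mulVec v := by
  rw [hanoiAdj, Matrix.add_mulVec, Matrix.add_mulVec]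

lemma three_mem (n : ℕ) : (3:ℝ) ∈ spectrum ℝ (hanoiAdj n) := by
  rw [mem_spec_iff]
  refine ⟨1, ?_, ?_⟩
  · intro h
    exact one_ne_zero (congrFun h (fun _ => 0))
  · rw [adj_mulVec_gens, genA_rowsum, genB_rowsum, genC_rowsum]
    funext t
    simp
    norm_num

lemma zero_mem (n : ℕ) : (0:ℝ) ∈ spectrum ℝ (hanoiAdj (n+1)) := by
  rw [mem_spec_iff]
  set v : HV (n+1) → ℝ := fun u => ![(1:ℝ), -1, 0] (u 0) with hv
  have vcons : ∀ (j : Fin 3) (t : HV n), v (Fin.cons j t) = ![(1:ℝ), -1, 0] j := by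
    intro j t; simp [hv]
  have v0 : (fun t => v (Fin.cons 0 t)) = (1 : HV n → ℝ) := by
    funext t; rw [vcons]; simp
  have v1 : (fun t => v (Fin.cons 1 t)) = -(1 : HV n → ℝ) := by
    funext t; rw [vcons]; simp
  have v2 : (fun t => v (Fin.cons 2 t)) = (0 : HV n → ℝ) := by
    funext t; rw [vcons]; simp
  refine ⟨v, ?_, ?_⟩
  · intro h
    have := congrFun h (Fin.cons 0 (fun _ => 0))
    rw [vcons] at this
    simp at this
  · refine funext_cons fun i t => ?_
    have G0 : ∀ t, (hanoiAdj (n+1)).mulVec v (Fin.cons 0 t) = 0 := by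
      intro t
      have e := congrFun (adj_mulVec0 v) t
      rw [v0, v1, v2, genC_rowsum] at e
      rw [e]; simp
    have G1 : ∀ t, (hanoiAdj (n+1)).mulVec v (Fin.cons 1 t) = 0 := by
      intro t
      have e := congrFun (adj_mulVec1 v) t
      rw [v0, v1, v2, Matrix.mulVec_neg, genB_rowsum] at e
      rw [e]; simp
    have G2 : ∀ t, (hanoiAdj (n+1)).mulVec v (Fin.cons 2 t) = 0 := by
      intro t
      have e := congrFun (adj_mulVec2 v) t
      rw [v0, v1, v2, Matrix.mulVec_zero] at e
      rw [e]; simp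
    rw [show ((0:ℝ) • v) (Fin.cons i t) = 0 from by simp]
    fin_cases i
    · exact G0 t
    · exact G1 t
    · exact G2 t

lemma hBlk_mulVec_const {n : ℕ} (F : Fin 3 → Fin 3 → Matrix (HV n) (HV n) ℝ)
    (c : Fin 3 → ℝ) (i : Fin 3) (t : HV n) :
    (hBlk F).mulVec (fun u => c (u 0)) (Fin.cons i t) =
      ∑ j : Fin 3, (F i j).mulVec (fun _ => c j) t := by
  rw [hBlk_mulVec]
  congr 1

lemma mulVec_const_zero {n : ℕ} (M : Matrix (HV n) (HV n) ℝ) :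
    M.mulVec (fun _ => (0:ℝ)) = fun _ => 0 :=
  Matrix.mulVec_zero M

lemma neg2_mem (n : ℕ) : (-2:ℝ) ∈ spectrum ℝ (hanoiAdj (n+2)) := by
  rw [mem_spec_iff]
  set g : Fin 3 → Fin 3 → ℝ := ![![0,1,-1],![-1,0,1],![1,-1,0]] with hg
  set p0 : HV (n+1) → ℝ := fun t => g 0 (t 0) with hp0
  set p1 : HV (n+1) → ℝ := fun t => g 1 (t 0) with hp1
  set p2 : HV (n+1) → ℝ := fun t => g 2 (t 0) with hp2
  have hC : (hanoiGenC (n+1)).mulVec p0 = -p0 := by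
    refine funext_cons fun i r => ?_
    rw [hp0, genC_succ, hBlk_mulVec_const]
    have : (-p0) (Fin.cons i r) = -(g 0 i) := by simp [hp0]
    rw [this]
    fin_cases i <;>
      simp [Fin.sum_univ_three, Matrix.vecHead, Matrix.vecTail, hg,
        mulVec_const_zero, Matrix.zero_mulVec, Matrix.one_mulVec]
  have hB : (hanoiGenB (n+1)).mulVec p1 = -p1 := by
    refine funext_cons fun i r => ?_
    rw [hp1, genB_succ, hBlk_mulVec_const]
    have : (-p1) (Fin.cons i r) = -(g 1 i) := by simp [hp1]
    rw [this]
    fin_cases i <;>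
      simp [Fin.sum_univ_three, Matrix.vecHead, Matrix.vecTail, hg,
        mulVec_const_zero, Matrix.zero_mulVec, Matrix.one_mulVec]
  have hA : (hanoiGenA (n+1)).mulVec p2 = -p2 := by
    refine funext_cons fun i r => ?_
    rw [hp2, genA_succ, hBlk_mulVec_const]
    have : (-p2) (Fin.cons i r) = -(g 2 i) := by simp [hp2]
    rw [this]
    fin_cases i <;>
      simp [Fin.sum_univ_three, Matrix.vecHead, Matrix.vecTail, hg,
        mulVec_const_zero, Matrix.zero_mulVec, Matrix.one_mulVec]
  have hsum : ∀ j : Fin 3, g 0 j + g 1 j + g 2 j = 0 := by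
    intro j; fin_cases j <;> norm_num [hg, Matrix.vecHead, Matrix.vecTail, Matrix.cons_val_two]
  set v : HV (n+2) → ℝ := fun u => g (u 0) (Fin.tail u 0) with hv
  have vcons : ∀ (j : Fin 3) (t : HV (n+1)), v (Fin.cons j t) = g j (t 0) := by
    intro j t; simp [hv, Fin.tail_cons]
  have v0 : (fun t => v (Fin.cons 0 t)) = p0 := by funext t; rw [vcons, hp0]
  have v1 : (fun t => v (Fin.cons 1 t)) = p1 := by funext t; rw [vcons, hp1]
  have v2 : (fun t => v (Fin.cons 2 t)) = p2 := by funext t; rw [vcons, hp2]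
  refine ⟨v, ?_, ?_⟩
  · intro h
    have := congrFun h (Fin.cons 0 (Fin.cons 1 (fun _ => 0)))
    rw [vcons] at this
    simp [hg] at this
  · refine funext_cons fun i t => ?_
    rw [show ((-2:ℝ) • v) (Fin.cons i t) = -2 * g i (t 0) from by rw [Pi.smul_apply, vcons, smul_eq_mul]]
    have G0 : ∀ t : HV (n+1), (hanoiAdj (n+2)).mulVec v (Fin.cons 0 t) = -2 * g 0 (t 0) := by
      intro t
      have e := congrFun (adj_mulVec0 v) t
      rw [v0, v1, v2, hC] at e
      rw [e]
      simp only [Pi.add_apply, Pi.neg_apply, hp0, hp1, hp2]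
      have := hsum (t 0)
      linarith
    have G1 : ∀ t : HV (n+1), (hanoiAdj (n+2)).mulVec v (Fin.cons 1 t) = -2 * g 1 (t 0) := by
      intro t
      have e := congrFun (adj_mulVec1 v) t
      rw [v0, v1, v2, hB] at e
      rw [e]
      simp only [Pi.add_apply, Pi.neg_apply, hp0, hp1, hp2]
      have := hsum (t 0)
      linarith
    have G2 : ∀ t : HV (n+1), (hanoiAdj (n+2)).mulVec v (Fin.cons 2 t) = -2 * g 2 (t 0) := by
      intro t
      have e := congrFun (adj_mulVec2 v) t
      rw [v0, v1, v2, hA] at e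
      rw [e]
      simp only [Pi.add_apply, Pi.neg_apply, hp0, hp1, hp2]
      have := hsum (t 0)
      linarith
    fin_cases i
    · exact G0 t
    · exact G1 t
    · exact G2 t

lemma gen_zero_mulVec (M : Matrix (HV 0) (HV 0) ℝ) (hM : M = 1) (v : HV 0 → ℝ) :
    M.mulVec v = v := by rw [hM, Matrix.one_mulVec]

lemma neg2_not_mem_1 : (-2:ℝ) ∉ spectrum ℝ (hanoiAdj 1) := by
  rw [mem_spec_iff]
  rintro ⟨v, hv, h⟩
  apply hv
  have z : ∀ (j : Fin 3) (t : HV 0), v (Fin.cons j t) = 0 := by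
    intro j t
    have e0 := congrFun (adj_mulVec0 v) t
    have e1 := congrFun (adj_mulVec1 v) t
    have e2 := congrFun (adj_mulVec2 v) t
    rw [gen_zero_mulVec _ genC_zero] at e0
    rw [gen_zero_mulVec _ genB_zero] at e1
    rw [gen_zero_mulVec _ genA_zero] at e2
    rw [h] at e0 e1 e2
    simp only [Pi.add_apply, Pi.smul_apply, smul_eq_mul] at e0 e1 e2
    have ha : v (Fin.cons 0 t) = 0 := by linarith
    have hb : v (Fin.cons 1 t) = 0 := by linarith
    have hc : v (Fin.cons 2 t) = 0 := by linarith
    fin_cases j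
    · exact ha
    · exact hb
    · exact hc
  refine funext_cons fun i t => z i t

lemma spec_zero : spectrum ℝ (hanoiAdj 0) = {3} := by
  ext x
  rw [mem_spec_iff, Set.mem_singleton_iff]
  constructor
  · rintro ⟨v, hv, h⟩
    rw [adj_mulVec_gens, gen_zero_mulVec _ genA_zero, gen_zero_mulVec _ genB_zero,
      gen_zero_mulVec _ genC_zero] at h
    by_contra hx
    apply hv
    funext t
    have e := congrFun h t
    simp only [Pi.add_apply, Pi.smul_apply, smul_eq_mul] at e
    have : (3 - x) * v t = 0 := by linarith
    rcases mul_eq_zero.mp this with h' | h'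
    · exact absurd (by linarith : x = 3) hx
    · exact h'
  · rintro rfl
    refine ⟨1, fun h => one_ne_zero (congrFun h (fun i => i.elim0)), ?_⟩
    rw [adj_mulVec_gens, gen_zero_mulVec _ genA_zero, gen_zero_mulVec _ genB_zero,
      gen_zero_mulVec _ genC_zero]
    funext t
    simp only [Pi.add_apply, Pi.smul_apply, Pi.one_apply, smul_eq_mul]
    norm_num

lemma spectrum_one : spectrum ℝ (hanoiAdj 1) = {0, 3} := by
  ext x
  simp only [Set.mem_insert_iff, Set.mem_singleton_iff]
  constructor
  · intro hx
    by_cases hx0 : x = 0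
    · exact Or.inl hx0
    by_cases hx2 : x = -2
    · exact absurd (hx2 ▸ hx) neg2_not_mem_1
    have := (hanoi_decimation hx0 hx2).mp hx
    rw [spec_zero, Set.mem_singleton_iff] at this
    right
    have h2 : (x - 3) * (x + 2) = 0 := by linear_combination this
    rcases mul_eq_zero.mp h2 with h | h
    · exact by linarith
    · exact absurd (by linarith : x = -2) hx2
  · rintro (rfl | rfl)
    · exact zero_mem 0
    · exact three_mem 1

noncomputable def hanoiRlo (θ : ℝ) : ℝ := (1 - Real.sqrt (13 + 4*θ))/2
noncomputable def hanoiRhi (θ : ℝ) : ℝ := (1 + Real.sqrt (13 + 4*θ))/2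

lemma hanoiF_eq_iff {θ x : ℝ} (hθ : -2 ≤ θ) :
    hanoiF x = θ ↔ x = hanoiRlo θ ∨ x = hanoiRhi θ := by
  have hd0 : (0:ℝ) ≤ 13 + 4*θ := by linarith
  have hd : Real.sqrt (13 + 4*θ)^2 = 13 + 4*θ := Real.sq_sqrt hd0
  rw [hanoiF]
  constructor
  · intro h
    have h2 : (2*x - 1 - Real.sqrt (13 + 4*θ)) * (2*x - 1 + Real.sqrt (13 + 4*θ)) = 0 := by
      linear_combination 4 * h - hd
    rcases mul_eq_zero.mp h2 with h' | h'
    · right; rw [hanoiRhi]; linarith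
    · left; rw [hanoiRlo]; linarith
  · rintro (rfl | rfl)
    · rw [hanoiRlo]; field_simp; linear_combination hd
    · rw [hanoiRhi]; field_simp; linear_combination hd

lemma hanoiR_bounds {θ : ℝ} (hθ : θ ∈ Set.Icc (-2:ℝ) 3) :
    hanoiRlo θ ∈ Set.Icc (-2:ℝ) 3 ∧ hanoiRhi θ ∈ Set.Icc (-2:ℝ) 3 ∧ hanoiRlo θ ≠ hanoiRhi θ := by
  obtain ⟨h1, h2⟩ := hθ
  have hd0 : (0:ℝ) < 13 + 4*θ := by linarith
  have hdpos : 0 < Real.sqrt (13 + 4*θ) := Real.sqrt_pos.mpr hd0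
  have hd5 : Real.sqrt (13 + 4*θ) ≤ 5 := by
    have h25 : Real.sqrt 25 = 5 := by
      rw [show (25:ℝ) = 5^2 by norm_num, Real.sqrt_sq (by norm_num : (0:ℝ) ≤ 5)]
    calc Real.sqrt (13 + 4*θ) ≤ Real.sqrt 25 := Real.sqrt_le_sqrt (by linarith)
    _ = 5 := h25
  refine ⟨⟨?_, ?_⟩, ⟨?_, ?_⟩, ?_⟩
  · rw [hanoiRlo]; linarith
  · rw [hanoiRlo]; linarith
  · rw [hanoiRhi]; linarith
  · rw [hanoiRhi]; linarith
  · rw [hanoiRlo, hanoiRhi]; intro h; rw [div_eq_div_iff] at h <;> norm_num at h ⊢ <;> linarith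

lemma hanoi_preimage {S : Set ℝ} (hfin : S.Finite) (hsub : S ⊆ Set.Icc (-2:ℝ) 3) :
    (hanoiF ⁻¹' S).Finite ∧ hanoiF ⁻¹' S ⊆ Set.Icc (-2:ℝ) 3 ∧
      (hanoiF ⁻¹' S).ncard = 2 * S.ncard := by
  classical
  set T : Finset ℝ := hfin.toFinset with hT
  set U : Finset ℝ := T.biUnion (fun θ => {hanoiRlo θ, hanoiRhi θ}) with hU
  have memT : ∀ θ, θ ∈ T ↔ θ ∈ S := fun θ => hfin.mem_toFinset
  have hset : hanoiF ⁻¹' S = ↑U := by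
    ext x
    simp only [Set.mem_preimage, Finset.coe_biUnion, Set.mem_iUnion, Finset.mem_coe,
      Finset.mem_insert, Finset.mem_singleton, hU]
    constructor
    · intro hx
      refine ⟨hanoiF x, (memT _).mpr hx, ?_⟩
      exact (hanoiF_eq_iff (hsub hx).1).mp rfl
    · rintro ⟨θ, hθT, hx⟩
      have hθS := (memT θ).mp hθT
      have := (hanoiF_eq_iff (hsub hθS).1).mpr hx
      rw [this]; exact hθS
  have hcard : U.card = 2 * T.card := by
    rw [hU, Finset.card_biUnion]
    · rw [Finset.sum_congr rfl (fun θ hθ => ?_), Finset.sum_const, smul_eq_mul, mul_comm]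
      have hθS := (memT θ).mp hθ
      exact Finset.card_pair (hanoiR_bounds (hsub hθS)).2.2
    · intro θ1 h1 θ2 h2 hne
      simp only [Finset.disjoint_left, Finset.mem_insert, Finset.mem_singleton]
      intro y hy1 hy2
      apply hne
      have e1 := (hanoiF_eq_iff (hsub ((memT θ1).mp h1)).1).mpr hy1
      have e2 := (hanoiF_eq_iff (hsub ((memT θ2).mp h2)).1).mpr hy2
      rw [← e1, ← e2]
  refine ⟨hset ▸ U.finite_toSet, ?_, ?_⟩
  · rw [hset]
    intro x hx
    simp only [Finset.coe_biUnion, Set.mem_iUnion, Finset.mem_coe, Finset.mem_insert,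
      Finset.mem_singleton, hU] at hx
    obtain ⟨θ, hθT, hx⟩ := hx
    have hb := hanoiR_bounds (hsub ((memT θ).mp hθT))
    rcases hx with rfl | rfl
    · exact hb.1
    · exact hb.2.1
  · rw [hset, Set.ncard_coe_finset, hcard, hT, Set.ncard_eq_toFinset_card S hfin]

lemma spec_succ_eq (n : ℕ) (h3 : (3:ℝ) ∈ spectrum ℝ (hanoiAdj (n+1))) :
    spectrum ℝ (hanoiAdj (n+2)) = insert (0:ℝ) (hanoiF ⁻¹' spectrum ℝ (hanoiAdj (n+1))) := by
  ext x
  simp only [Set.mem_insert_iff, Set.mem_preimage]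
  constructor
  · intro hx
    by_cases hx0 : x = 0
    · exact Or.inl hx0
    by_cases hx2 : x = -2
    · subst hx2
      right
      rw [show hanoiF (-2) = 3 by rw [hanoiF]; norm_num]
      exact h3
    · right
      rw [hanoiF]
      exact (hanoi_decimation hx0 hx2).mp hx
  · rintro (rfl | hx)
    · exact zero_mem (n+1)
    · by_cases hx0 : x = 0
      · exact hx0 ▸ zero_mem (n+1)
      by_cases hx2 : x = -2
      · exact hx2 ▸ neg2_mem n
      · rw [hanoiF] at hx
        exact (hanoi_decimation hx0 hx2).mpr hx

lemma hanoi_aux : ∀ n : ℕ, (spectrum ℝ (hanoiAdj (n+1))).Finite ∧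
    spectrum ℝ (hanoiAdj (n+1)) ⊆ Set.Icc (-2:ℝ) 3 ∧
    (3:ℝ) ∈ spectrum ℝ (hanoiAdj (n+1)) ∧
    (spectrum ℝ (hanoiAdj (n+1))).ncard = 3 * 2^n - 1 := by
  intro n
  induction n with
  | zero =>
    rw [spectrum_one]
    refine ⟨(Set.finite_singleton _).insert _, ?_, ?_, ?_⟩
    · intro x hx
      rcases hx with rfl | hx
      · norm_num
      · rw [Set.mem_singleton_iff] at hx; subst hx; norm_num
    · right; rfl
    · rw [Set.ncard_pair (by norm_num : (0:ℝ) ≠ 3)]; norm_num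
  | succ n ih =>
    obtain ⟨hfin, hsub, h3, hcard⟩ := ih
    obtain ⟨pfin, psub, pcard⟩ := hanoi_preimage hfin hsub
    have hrec := spec_succ_eq n h3
    have h0notin : (0:ℝ) ∉ hanoiF ⁻¹' spectrum ℝ (hanoiAdj (n+1)) := by
      intro h
      rw [Set.mem_preimage, show hanoiF 0 = -3 by rw [hanoiF]; norm_num] at h
      have := (hsub h).1
      norm_num at this
    refine ⟨?_, ?_, ?_, ?_⟩
    · rw [hrec]; exact pfin.insert 0
    · rw [hrec]
      refine Set.insert_subset (by norm_num) psub
    · rw [hrec]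
      refine Set.mem_insert_of_mem _ ?_
      rw [Set.mem_preimage, show hanoiF 3 = 3 by rw [hanoiF]; norm_num]
      exact h3
    · rw [hrec, Set.ncard_insert_of_notMem h0notin pfin, pcard, hcard]
      have h1 : 1 ≤ 2^n := Nat.one_le_two_pow
      have h2 : 2^(n+1) = 2 * 2^n := by rw [pow_succ]; ring
      omega


/-- For `n ≥ 1`, the adjacency matrix `Δₙ = aₙ + bₙ + cₙ` of the level-`n` Schreier graph
of the Hanoi Towers group on three pegs has exactly `3·2^{n-1} - 1` distinct real
eigenvalues. -/
theorem hanoiAdj_card_spectrum (n : ℕ) (hn : 1 ≤ n) :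
    (spectrum ℝ (hanoiAdj n)).ncard = 3 * 2 ^ (n - 1) - 1 := by
  obtain ⟨m, rfl⟩ : ∃ m, n = m + 1 := ⟨n - 1, by omega⟩
  simpa using (hanoi_aux m).2.2.2
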